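/- (Barbalat's lemma, as used in the convergence proof.) Let V : [0,∞) → ℝ be differentiable, bounded from below, with V'(t) ≤ 0 for all t ≥ 0, and suppose V' is uniformly continuous on [0,∞). Then V'(t) → 0 as t → ∞. -/
import Mathlib


open Filter

/-- Barbalat's lemma, in the form used in the convergence proof. -/
theorem barbalat
    (V V' : ℝ → ℝ)
    (hdiff : ∀ t ≥ (0 : ℝ), HasDerivAt V (V' t) t)
    (hbdd : ∃ m : ℝ, ∀ t ≥ (0 : ℝ), m ≤ V t)
    (hneg : ∀ t ≥ (0 : ℝ), V' t ≤ 0)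
    (hUC : UniformContinuousOn V' (Set.Ici 0)) :
    Tendsto V' atTop (nhds 0) := by
  obtain ⟨m, hm⟩ := hbdd
  -- V is antitone on [0, ∞)
  have hcont : ContinuousOn V (Set.Ici (0:ℝ)) := fun t ht =>
    ((hdiff t ht).continuousAt).continuousWithinAt
  have hanti : AntitoneOn V (Set.Ici (0:ℝ)) := by
    apply antitoneOn_of_deriv_nonpos (convex_Ici 0) hcont
    · rw [interior_Ici]
      exact fun t ht => ((hdiff t ht.le).differentiableAt).differentiableWithinAt
    · rw [interior_Ici]
      intro t ht
      rw [(hdiff t ht.le).deriv]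
      exact hneg t ht.le
  -- V tends to a limit L at infinity
  set g : ℝ → ℝ := fun t => V (max t 0) with hg
  have hganti : Antitone g := fun s t hst =>
    hanti (le_max_right s 0) (le_max_right t 0) (max_le_max hst le_rfl)
  have hgbdd : BddBelow (Set.range g) := ⟨m, by
    rintro _ ⟨t, rfl⟩; exact hm _ (le_max_right t 0)⟩
  have hgL : Tendsto g atTop (nhds (⨅ t, g t)) := tendsto_atTop_ciInf hganti hgbdd
  have hVg : g =ᶠ[atTop] V := by
    filter_upwards [eventually_ge_atTop (0:ℝ)] with t ht
    simp [hg, max_eq_left ht]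
  have hVL : Tendsto V atTop (nhds (⨅ t, g t)) := hgL.congr' hVg
  rw [Metric.tendsto_atTop]
  intro ε hε
  by_contra hcon
  push_neg at hcon
  -- uniform continuity : get δ
  obtain ⟨δ, hδ, hδ'⟩ := (Metric.uniformContinuousOn_iff.mp hUC) (ε/2) (by linarith)
  -- key estimate : at any t ≥ 0 with V' t ≤ -ε, V drops by ε*δ/4 over [t, t+δ/2]
  have key : ∀ t : ℝ, 0 ≤ t → V' t ≤ -ε → ε * δ / 4 ≤ V t - V (t + δ/2) := by
    intro t ht hVt
    have hsmall : ∀ s ∈ Set.Icc t (t + δ/2), V' s ≤ -(ε/2) := by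
      intro s hs
      have hs0 : (0:ℝ) ≤ s := le_trans ht hs.1
      have hd : dist s t < δ := by
        rw [Real.dist_eq, abs_of_nonneg (by linarith [hs.1])]
        linarith [hs.2]
      have := hδ' s (Set.mem_Ici.mpr hs0) t (Set.mem_Ici.mpr ht) hd
      rw [Real.dist_eq] at this
      have := abs_lt.mp this
      linarith [this.1]
    -- W s = V s + (ε/2) s is antitone on [t, t+δ/2]
    have hW : AntitoneOn (fun s => V s + (ε/2) * s) (Set.Icc t (t + δ/2)) := by
      apply antitoneOn_of_deriv_nonpos (convex_Icc _ _)
      · exact fun s hs => (((hdiff s (le_trans ht hs.1)).add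
          ((hasDerivAt_id s).const_mul (ε/2))).continuousAt).continuousWithinAt
      · intro s hs
        rw [interior_Icc] at hs
        exact (((hdiff s (le_trans ht hs.1.le)).add
          ((hasDerivAt_id s).const_mul (ε/2))).differentiableAt).differentiableWithinAt
      · intro s hs
        rw [interior_Icc] at hs
        have hds : HasDerivAt (fun s => V s + (ε/2) * s) (V' s + (ε/2) * 1) s :=
          (hdiff s (le_trans ht hs.1.le)).add ((hasDerivAt_id s).const_mul (ε/2))
        rw [hds.deriv]
        have := hsmall s ⟨hs.1.le, hs.2.le⟩
        linarith
    have hmem1 : t ∈ Set.Icc t (t + δ/2) := ⟨le_refl t, by linarith⟩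
    have hmem2 : t + δ/2 ∈ Set.Icc t (t + δ/2) := ⟨by linarith, le_refl _⟩
    have := hW hmem1 hmem2 (by linarith)
    simp only at this
    nlinarith
  -- V t - V (t + δ/2) → 0
  have hshift : Tendsto (fun t => V (t + δ/2)) atTop (nhds (⨅ t, g t)) :=
    hVL.comp (tendsto_atTop_add_const_right _ _ tendsto_id)
  have hdiff0 : Tendsto (fun t => V t - V (t + δ/2)) atTop (nhds 0) := by
    have := hVL.sub hshift
    rwa [sub_self] at this
  have hev : ∀ᶠ t in atTop, V t - V (t + δ/2) < ε * δ / 4 :=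
    hdiff0.eventually_lt_const (by positivity)
  obtain ⟨N, hN⟩ := eventually_atTop.mp hev
  obtain ⟨n, hn, hεn⟩ := hcon (max N 0)
  have hn0 : (0:ℝ) ≤ n := le_trans (le_max_right N 0) hn
  have hnN : N ≤ n := le_trans (le_max_left N 0) hn
  have hVn : V' n ≤ -ε := by
    rw [dist_zero_right, Real.norm_eq_abs, abs_of_nonpos (hneg n hn0)] at hεn
    linarith
  have h1 := key n hn0 hVn
  have h2 := hN n hnN
  linarith
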